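/- Let p : [0,∞) → ℝ be continuous, p ≥ 0, with liminf_{t→∞} p(t)/t^α > 0 for some α > 0. Let (u_n) be a sequence of absolutely continuous functions on [0,∞) with u_n(0)=0 and constants M₁, M₂, M₃ such that ∫₀^∞|u_n|² ≤ M₁, ∫₀^∞|u_n'|² ≤ M₂, ∫₀^∞ p|u_n|² ≤ M₃ for all n. Then (u_n) has a subsequence converging in L²([0,∞)). -/

import Mathlib

open MeasureTheory Set Filter Topology

private lemma aux_p_tendsto (p : ℝ → ℝ) (hp0 : ∀ t, 0 ≤ p t)
    (α : ℝ) (hα : 0 < α)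
    (hliminf : 0 < Filter.liminf (fun t : ℝ => p t / t ^ α) Filter.atTop) :
    Tendsto p atTop atTop := by
  set L := Filter.liminf (fun t : ℝ => p t / t ^ α) Filter.atTop with hL
  have hbdd : Filter.IsBoundedUnder (· ≥ ·) atTop (fun t : ℝ => p t / t ^ α) := by
    refine ⟨0, ?_⟩
    simp only [eventually_map]
    filter_upwards [eventually_gt_atTop (0 : ℝ)] with t ht
    exact div_nonneg (hp0 t) (Real.rpow_pos_of_pos ht α).le
  have h1 : ∀ᶠ t : ℝ in atTop, L / 2 < p t / t ^ α :=
    eventually_lt_of_lt_liminf (by linarith) hbdd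
  have h2 : ∀ᶠ t : ℝ in atTop, L / 2 * t ^ α ≤ p t := by
    filter_upwards [h1, eventually_gt_atTop (0 : ℝ)] with t ht h0
    have htα : (0 : ℝ) < t ^ α := Real.rpow_pos_of_pos h0 α
    rw [lt_div_iff₀ htα] at ht
    linarith
  have h3 : Tendsto (fun t : ℝ => L / 2 * t ^ α) atTop atTop :=
    (tendsto_rpow_atTop hα).const_mul_atTop (by linarith)
  exact tendsto_atTop_mono' atTop h2 h3

/-- Let `p ≥ 0` be continuous with `liminf_{t→∞} p(t)/t^α > 0` for some
`α > 0`, and `(u_n)` absolutely continuous with `u_n(0)=0` and uniform bounds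
`∫|u_n|² ≤ M₁`, `∫|u_n'|² ≤ M₂`, `∫ p|u_n|² ≤ M₃`. Then `(u_n)` has a subsequence
converging in `L²([0,∞))`. -/
theorem stmt11 (p : ℝ → ℝ) (hp : Continuous p) (hp0 : ∀ t, 0 ≤ p t)
    (α : ℝ) (hα : 0 < α)
    (hliminf : 0 < Filter.liminf (fun t : ℝ => p t / t ^ α) Filter.atTop)
    (M₁ M₂ M₃ : ℝ) (u : ℕ → ℝ → ℝ) (u' : ℕ → ℝ → ℝ)
    (hu' : ∀ n, LocallyIntegrableOn (u' n) (Ici 0))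
    (hu : ∀ n, ∀ t ≥ (0:ℝ), u n t = ∫ s in (0:ℝ)..t, u' n s)
    (hint1 : ∀ n, IntegrableOn (fun t => u n t ^ 2) (Ioi 0))
    (hb1 : ∀ n, ∫ t in Ioi (0:ℝ), u n t ^ 2 ≤ M₁)
    (hint2 : ∀ n, IntegrableOn (fun t => u' n t ^ 2) (Ioi 0))
    (hb2 : ∀ n, ∫ t in Ioi (0:ℝ), u' n t ^ 2 ≤ M₂)
    (hint3 : ∀ n, IntegrableOn (fun t => p t * u n t ^ 2) (Ioi 0))
    (hb3 : ∀ n, ∫ t in Ioi (0:ℝ), p t * u n t ^ 2 ≤ M₃) :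
    ∃ φ : ℕ → ℕ, StrictMono φ ∧ ∃ v : ℝ → ℝ,
      IntegrableOn (fun t => v t ^ 2) (Ioi 0) ∧
      Tendsto (fun n => ∫ t in Ioi (0:ℝ), (u (φ n) t - v t) ^ 2)
        atTop (nhds 0) := by
  -- basic nonnegativity of the constants
  have hM2 : 0 ≤ M₂ :=
    le_trans (setIntegral_nonneg measurableSet_Ioi fun t _ => sq_nonneg _) (hb2 0)
  have hM1 : 0 ≤ M₁ :=
    le_trans (setIntegral_nonneg measurableSet_Ioi fun t _ => sq_nonneg _) (hb1 0)
  have hM3 : 0 ≤ M₃ :=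
    le_trans (setIntegral_nonneg measurableSet_Ioi fun t _ =>
      mul_nonneg (hp0 t) (sq_nonneg _)) (hb3 0)
  -- interval integrability of u' on subintervals of [0, ∞)
  have hii : ∀ n (a b : ℝ), 0 ≤ a → a ≤ b → IntervalIntegrable (u' n) volume a b := by
    intro n a b ha hab
    have h := (hu' n).integrableOn_compact_subset
      (Set.Icc_subset_Ici_iff hab |>.2 ha) isCompact_Icc
    rw [intervalIntegrable_iff]
    exact h.mono_set (by rw [Set.uIoc_of_le hab]; exact Ioc_subset_Icc_self)
  -- key modulus of continuity estimate via Cauchy-Schwarz (AM-GM form)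
  have hK : ∀ n (c s t : ℝ), 0 < c → 0 ≤ s → s ≤ t →
      |u n t - u n s| ≤ (c * M₂ + (t - s) / c) / 2 := by
    intro n c s t hc hs hst
    have ht0 : (0:ℝ) ≤ t := hs.trans hst
    have hsub : u n t - u n s = ∫ x in s..t, u' n x := by
      rw [hu n t ht0, hu n s hs]
      exact intervalIntegral.integral_interval_sub_left (hii n 0 t le_rfl ht0)
        (hii n 0 s le_rfl hs)
    have hsq : IntervalIntegrable (fun x => u' n x ^ 2) volume s t := by
      rw [intervalIntegrable_iff]
      refine (hint2 n).mono_set ?_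
      rw [Set.uIoc_of_le hst]
      exact fun x hx => lt_of_le_of_lt hs hx.1
    have h1 : |∫ x in s..t, u' n x| ≤ ∫ x in s..t, |u' n x| :=
      intervalIntegral.abs_integral_le_integral_abs hst
    have h2 : ∫ x in s..t, |u' n x| ≤ ∫ x in s..t, (c * u' n x ^ 2 + 1 / c) / 2 := by
      refine intervalIntegral.integral_mono_on hst ((hii n s t hs hst).abs)
        (((hsq.const_mul c).add intervalIntegrable_const).div_const 2) ?_
      intro x _
      have hkey : (c * u' n x ^ 2 + 1 / c) / 2 - |u' n x|
          = (c * |u' n x| - 1) ^ 2 / (2 * c) := by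
        field_simp
        rw [← sq_abs (u' n x)]
        ring
      have h0 : (0:ℝ) ≤ (c * |u' n x| - 1) ^ 2 / (2 * c) :=
        div_nonneg (sq_nonneg _) (by linarith)
      linarith
    have h3 : ∫ x in s..t, (c * u' n x ^ 2 + 1 / c) / 2
        = (c * (∫ x in s..t, u' n x ^ 2) + (t - s) * (1 / c)) / 2 := by
      rw [intervalIntegral.integral_div, intervalIntegral.integral_add
        (hsq.const_mul c) intervalIntegrable_const,
        intervalIntegral.integral_const_mul, intervalIntegral.integral_const,
        smul_eq_mul]
    have h4 : ∫ x in s..t, u' n x ^ 2 ≤ M₂ := by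
      rw [intervalIntegral.integral_of_le hst]
      refine le_trans (setIntegral_mono_set (hint2 n)
        (Eventually.of_forall fun x => sq_nonneg _) ?_) (hb2 n)
      exact HasSubset.Subset.eventuallyLE fun x hx => lt_of_le_of_lt hs hx.1
    rw [hsub]
    calc |∫ x in s..t, u' n x| ≤ (c * (∫ x in s..t, u' n x ^ 2) + (t - s) * (1 / c)) / 2 := by
          rw [← h3]; exact h1.trans h2
      _ ≤ (c * M₂ + (t - s) / c) / 2 := by
          have : c * (∫ x in s..t, u' n x ^ 2) ≤ c * M₂ :=
            mul_le_mul_of_nonneg_left h4 hc.le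
          rw [div_eq_mul_one_div (t - s) c]
          linarith
  have hzero : ∀ n, u n 0 = 0 := by
    intro n; rw [hu n 0 le_rfl, intervalIntegral.integral_same]
  have hbd : ∀ n (t : ℝ), 0 ≤ t → |u n t| ≤ (M₂ + t) / 2 := by
    intro n t ht
    have := hK n 1 0 t one_pos le_rfl ht
    rw [hzero n] at this
    simpa using this
  -- uniform equicontinuity
  have hequi : ∀ ε : ℝ, 0 < ε → ∃ δ : ℝ, 0 < δ ∧ ∀ n (s t : ℝ), 0 ≤ s → s ≤ t → t - s ≤ δ →
      |u n t - u n s| ≤ ε := by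
    intro ε hε
    refine ⟨ε ^ 2 / (M₂ + 1), by positivity, fun n s t hs hst hd => ?_⟩
    have hc : (0:ℝ) < ε / (M₂ + 1) := by positivity
    have := hK n (ε / (M₂ + 1)) s t hc hs hst
    have h1 : ε / (M₂ + 1) * M₂ ≤ ε := by
      rw [div_mul_eq_mul_div, div_le_iff₀ (by linarith : (0:ℝ) < M₂ + 1)]
      nlinarith
    have h2 : (t - s) / (ε / (M₂ + 1)) ≤ ε := by
      rw [div_le_iff₀ hc]
      have : ε * (ε / (M₂ + 1)) = ε ^ 2 / (M₂ + 1) := by ring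
      linarith [this ▸ hd]
    linarith
  -- the "extended" continuous versions of u n
  set g : ℕ → ℝ → ℝ := fun n t => u n (max t 0) with hg_def
  have hug : ∀ n (t : ℝ), 0 ≤ t → g n t = u n t := by
    intro n t ht; simp [hg_def, max_eq_left ht]
  have hg_cont : ∀ n, Continuous (g n) := by
    intro n
    rw [Metric.continuous_iff]
    intro t ε hε
    obtain ⟨δ, hδ, hE⟩ := hequi (ε / 2) (by positivity)
    refine ⟨δ, hδ, fun s hst => ?_⟩
    have hmax : |max s 0 - max t 0| ≤ |s - t| := abs_max_sub_max_le_abs s t 0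
    have hd : |max s 0 - max t 0| ≤ δ := le_trans hmax (le_of_lt (Real.dist_eq s t ▸ hst))
    have key : |g n s - g n t| ≤ ε / 2 := by
      show |u n (max s 0) - u n (max t 0)| ≤ ε / 2
      rcases le_total (max s 0) (max t 0) with h | h
      · have hd' : max t 0 - max s 0 ≤ δ := by
          rw [abs_sub_comm, abs_of_nonneg (sub_nonneg.2 h)] at hd; exact hd
        have := hE n (max s 0) (max t 0) (le_max_right _ _) h hd'
        rwa [abs_sub_comm]
      · have hd' : max s 0 - max t 0 ≤ δ := by
          rw [abs_of_nonneg (sub_nonneg.2 h)] at hd; exact hd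
        exact hE n (max t 0) (max s 0) (le_max_right _ _) h hd'
    rw [Real.dist_eq]
    linarith
  -- extraction of a subsequence converging at all rational points
  set B : ℚ → ℝ := fun q => (M₂ + max (q:ℝ) 0) / 2 with hB_def
  have hScomp : IsCompact (Set.univ.pi fun q : ℚ => Icc (-(B q)) (B q)) :=
    isCompact_univ_pi fun q => isCompact_Icc
  have hmem : ∀ n, (fun q : ℚ => g n (q:ℝ)) ∈ (Set.univ.pi fun q : ℚ => Icc (-(B q)) (B q)) := by
    intro n
    rw [Set.mem_univ_pi]
    intro q
    have := hbd n (max (q:ℝ) 0) (le_max_right _ _)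
    exact abs_le.1 this
  obtain ⟨G, -, φ, hφ, hconv⟩ := hScomp.tendsto_subseq hmem
  have hq : ∀ q : ℚ, Tendsto (fun n => g (φ n) (q:ℝ)) atTop (𝓝 (G q)) := by
    intro q
    exact (tendsto_pi_nhds.1 hconv) q
  -- pointwise Cauchy (hence convergent) everywhere
  have hCauchy : ∀ t : ℝ, CauchySeq (fun n => g (φ n) t) := by
    intro t
    rw [Metric.cauchySeq_iff]
    intro ε hε
    obtain ⟨δ, hδ, hE⟩ := hequi (ε / 4) (by positivity)
    set a := max t 0 with ha_def
    have ha : 0 ≤ a := le_max_right _ _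
    obtain ⟨q, hq1, hq2⟩ := exists_rat_btwn (show a < a + δ by linarith)
    have hq0 : (0:ℝ) ≤ (q:ℝ) := le_trans ha hq1.le
    have hnear : ∀ m, |g m (q:ℝ) - g m t| ≤ ε / 4 := by
      intro m
      show |u m (max (q:ℝ) 0) - u m (max t 0)| ≤ ε / 4
      rw [max_eq_left hq0]
      exact hE m (max t 0) (q:ℝ) (le_max_right _ _) hq1.le (by linarith)
    have hcq : CauchySeq (fun n => g (φ n) (q:ℝ)) := (hq q).cauchySeq
    obtain ⟨N, hN⟩ := Metric.cauchySeq_iff.1 hcq (ε / 4) (by positivity)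
    refine ⟨N, fun m hm k hk => ?_⟩
    have h1 := hnear (φ m)
    have h2 := hnear (φ k)
    have h3 := hN m hm k hk
    rw [Real.dist_eq] at h3 ⊢
    calc |g (φ m) t - g (φ k) t|
        = |(g (φ m) t - g (φ m) (q:ℝ)) + (g (φ m) (q:ℝ) - g (φ k) (q:ℝ))
            + (g (φ k) (q:ℝ) - g (φ k) t)| := by ring_nf
      _ ≤ |g (φ m) t - g (φ m) (q:ℝ)| + |g (φ m) (q:ℝ) - g (φ k) (q:ℝ)|
            + |g (φ k) (q:ℝ) - g (φ k) t| := by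
          exact (abs_add_three _ _ _)
      _ < ε := by
          rw [abs_sub_comm (g (φ m) t)] at *
          linarith
  set v : ℝ → ℝ := fun t => limUnder atTop (fun n => g (φ n) t) with hv_def
  have hv : ∀ t, Tendsto (fun n => g (φ n) t) atTop (𝓝 (v t)) := by
    intro t
    obtain ⟨l, hl⟩ := cauchySeq_tendsto_of_complete (hCauchy t)
    rwa [show v t = l from hl.limUnder_eq]
  have hvmeas : Measurable v :=
    measurable_of_tendsto_metrizable (fun n => (hg_cont (φ n)).measurable)
      (tendsto_pi_nhds.2 hv)
  have hvbd : ∀ t : ℝ, 0 ≤ t → |v t| ≤ (M₂ + t) / 2 := by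
    intro t ht
    refine le_of_tendsto (hv t).abs (Eventually.of_forall fun n => ?_)
    rw [hug _ _ ht]
    exact hbd (φ n) t ht
  -- integrability facts for g
  have hint1g : ∀ n, IntegrableOn (fun t => g n t ^ 2) (Ioi 0) := by
    intro n
    refine (hint1 n).congr_fun (fun t ht => ?_) measurableSet_Ioi
    show u n t ^ 2 = g n t ^ 2
    rw [hug n t (le_of_lt ht)]
  have hb1g : ∀ n, ∫ t in Ioi (0:ℝ), g n t ^ 2 ≤ M₁ := by
    intro n
    have he : ∫ t in Ioi (0:ℝ), g n t ^ 2 = ∫ t in Ioi (0:ℝ), u n t ^ 2 :=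
      setIntegral_congr_fun measurableSet_Ioi (fun t ht => by
        show g n t ^ 2 = u n t ^ 2
        rw [hug n t (le_of_lt ht)])
    rw [he]
    exact hb1 n
  have hint3g : ∀ n, IntegrableOn (fun t => p t * g n t ^ 2) (Ioi 0) := by
    intro n
    refine (hint3 n).congr_fun (fun t ht => ?_) measurableSet_Ioi
    show p t * u n t ^ 2 = p t * g n t ^ 2
    rw [hug n t (le_of_lt ht)]
  have hb3g : ∀ n, ∫ t in Ioi (0:ℝ), p t * g n t ^ 2 ≤ M₃ := by
    intro n
    have he : ∫ t in Ioi (0:ℝ), p t * g n t ^ 2 = ∫ t in Ioi (0:ℝ), p t * u n t ^ 2 :=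
      setIntegral_congr_fun measurableSet_Ioi (fun t ht => by
        show p t * g n t ^ 2 = p t * u n t ^ 2
        rw [hug n t (le_of_lt ht)])
    rw [he]
    exact hb3 n
  -- Fatou-type estimate transferring uniform L² bounds to the limit v
  have hvint_le : ∀ X K : ℝ, 0 ≤ X → 0 ≤ K → (∀ m, ∫ t in Ioi X, g (φ m) t ^ 2 ≤ K) →
      IntegrableOn (fun t => v t ^ 2) (Ioi X) ∧ ∫ t in Ioi X, v t ^ 2 ≤ K := by
    intro X K hX hKnn hbK
    have hsub : Ioi X ⊆ Ioi (0:ℝ) := Ioi_subset_Ioi hX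
    have hgi : ∀ m, IntegrableOn (fun t => g (φ m) t ^ 2) (Ioi X) :=
      fun m => (hint1g (φ m)).mono_set hsub
    have hlin : ∫⁻ t in Ioi X, ENNReal.ofReal (v t ^ 2) ≤ ENNReal.ofReal K := by
      have hlim : ∀ t : ℝ, ENNReal.ofReal (v t ^ 2)
          = liminf (fun m => ENNReal.ofReal (g (φ m) t ^ 2)) atTop := by
        intro t
        have : Tendsto (fun m => ENNReal.ofReal (g (φ m) t ^ 2)) atTop
            (𝓝 (ENNReal.ofReal (v t ^ 2))) :=
          (ENNReal.continuous_ofReal.tendsto _).comp ((hv t).pow 2)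
        exact this.liminf_eq.symm
      calc ∫⁻ t in Ioi X, ENNReal.ofReal (v t ^ 2)
          = ∫⁻ t in Ioi X, liminf (fun m => ENNReal.ofReal (g (φ m) t ^ 2)) atTop :=
            lintegral_congr fun t => hlim t
        _ ≤ liminf (fun m => ∫⁻ t in Ioi X, ENNReal.ofReal (g (φ m) t ^ 2)) atTop :=
            lintegral_liminf_le fun m =>
              ((hg_cont (φ m)).measurable.pow_const 2).ennreal_ofReal
        _ ≤ ENNReal.ofReal K := by
            refine liminf_le_of_frequently_le' (Frequently.of_forall fun m => ?_)
            rw [← ofReal_integral_eq_lintegral_ofReal (hgi m)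
              (Eventually.of_forall fun t => sq_nonneg _)]
            exact ENNReal.ofReal_le_ofReal (hbK m)
    have hvint : IntegrableOn (fun t => v t ^ 2) (Ioi X) := by
      refine ⟨(hvmeas.pow_const 2).aestronglyMeasurable, ?_⟩
      rw [hasFiniteIntegral_iff_ofReal (Eventually.of_forall fun t => sq_nonneg _)]
      exact lt_of_le_of_lt hlin ENNReal.ofReal_lt_top
    refine ⟨hvint, ?_⟩
    rw [integral_eq_lintegral_of_nonneg_ae (Eventually.of_forall fun t => sq_nonneg _)
      (hvmeas.pow_const 2).aestronglyMeasurable]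
    calc (∫⁻ t in Ioi X, ENNReal.ofReal (v t ^ 2)).toReal
        ≤ (ENNReal.ofReal K).toReal := ENNReal.toReal_mono ENNReal.ofReal_ne_top hlin
      _ = K := ENNReal.toReal_ofReal hKnn
  have hvint : IntegrableOn (fun t => v t ^ 2) (Ioi 0) :=
    (hvint_le 0 M₁ le_rfl hM1 fun m => hb1g (φ m)).1
  -- tail estimate from the potential term
  have hptend := aux_p_tendsto p hp0 α hα hliminf
  have htail : ∀ C : ℝ, 0 < C → ∃ X : ℝ, 1 ≤ X ∧
      ∀ n, ∫ t in Ioi X, g n t ^ 2 ≤ M₃ / C := by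
    intro C hC
    obtain ⟨X₀, hX₀⟩ := eventually_atTop.1 (hptend.eventually (eventually_ge_atTop C))
    refine ⟨max X₀ 1, le_max_right _ _, fun n => ?_⟩
    set X := max X₀ 1 with hX_def
    have hX0 : (0:ℝ) < X := lt_of_lt_of_le one_pos (le_max_right _ _)
    have hsub : Ioi X ⊆ Ioi (0:ℝ) := Ioi_subset_Ioi hX0.le
    have hpX : ∀ t ∈ Ioi X, C ≤ p t := fun t ht =>
      hX₀ t (le_trans (le_max_left _ _) (le_of_lt ht))
    have hgi : IntegrableOn (fun t => g n t ^ 2) (Ioi X) := (hint1g n).mono_set hsub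
    have h1 : C * ∫ t in Ioi X, g n t ^ 2 ≤ ∫ t in Ioi X, p t * g n t ^ 2 := by
      rw [← integral_const_mul]
      refine setIntegral_mono_on (hgi.const_mul C) ((hint3g n).mono_set hsub)
        measurableSet_Ioi ?_
      intro t ht
      exact mul_le_mul_of_nonneg_right (hpX t ht) (sq_nonneg _)
    have h2 : ∫ t in Ioi X, p t * g n t ^ 2 ≤ ∫ t in Ioi (0:ℝ), p t * g n t ^ 2 :=
      setIntegral_mono_set (hint3g n)
        (Eventually.of_forall fun t => mul_nonneg (hp0 t) (sq_nonneg _))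
        (HasSubset.Subset.eventuallyLE hsub)
    rw [le_div_iff₀ hC, mul_comm]
    exact le_trans h1 (le_trans h2 (hb3g n))
  -- integrability of the differences
  have hDint : ∀ m, IntegrableOn (fun t => (g m t - v t) ^ 2) (Ioi 0) := by
    intro m
    refine Integrable.mono' (((hint1g m).const_mul 2).add (hvint.const_mul 2))
      (((hg_cont m).measurable.sub hvmeas).pow_const 2).aestronglyMeasurable
      (Eventually.of_forall fun t => ?_)
    rw [Real.norm_of_nonneg (sq_nonneg _)]
    show (g m t - v t) ^ 2 ≤ 2 * g m t ^ 2 + 2 * v t ^ 2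
    nlinarith [sq_nonneg (g m t + v t)]
  -- the main convergence
  refine ⟨φ, hφ, v, hvint, ?_⟩
  rw [Metric.tendsto_atTop]
  intro ε hε
  set C : ℝ := 8 * (M₃ + 1) / ε with hC_def
  have hC : 0 < C := by positivity
  obtain ⟨X, hX1, htailb⟩ := htail C hC
  have hX0 : (0:ℝ) < X := lt_of_lt_of_le one_pos hX1
  have hKnn : 0 ≤ M₃ / C := div_nonneg hM3 hC.le
  obtain ⟨hvtint, hvt⟩ := hvint_le X (M₃ / C) hX0.le hKnn
    fun m => htailb (φ m)
  -- the tail of each difference is at most ε/2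
  have htail4 : 4 * (M₃ / C) ≤ ε / 2 := by
    have hc1 : (8 * M₃) / C ≤ ε := by
      rw [div_le_iff₀ hC, hC_def]
      rw [mul_comm ε, div_mul_cancel₀ _ (ne_of_gt hε)]
      linarith
    have : 4 * (M₃ / C) = (8 * M₃) / C / 2 := by ring
    linarith
  have hdtail : ∀ m, ∫ t in Ioi X, (g (φ m) t - v t) ^ 2 ≤ ε / 2 := by
    intro m
    have hsub : Ioi X ⊆ Ioi (0:ℝ) := Ioi_subset_Ioi hX0.le
    have hgi : IntegrableOn (fun t => g (φ m) t ^ 2) (Ioi X) :=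
      (hint1g (φ m)).mono_set hsub
    have h1 : ∫ t in Ioi X, (g (φ m) t - v t) ^ 2
        ≤ ∫ t in Ioi X, (2 * g (φ m) t ^ 2 + 2 * v t ^ 2) := by
      refine setIntegral_mono_on ((hDint (φ m)).mono_set hsub)
        ((hgi.const_mul 2).add (hvtint.const_mul 2)) measurableSet_Ioi ?_
      intro t _
      nlinarith [sq_nonneg (g (φ m) t + v t)]
    have h2 : ∫ t in Ioi X, (2 * g (φ m) t ^ 2 + 2 * v t ^ 2)
        = 2 * (∫ t in Ioi X, g (φ m) t ^ 2) + 2 * ∫ t in Ioi X, v t ^ 2 := by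
      rw [integral_add (hgi.const_mul 2) (hvtint.const_mul 2), integral_const_mul,
        integral_const_mul]
    have h3 := htailb (φ m)
    calc ∫ t in Ioi X, (g (φ m) t - v t) ^ 2
        ≤ 2 * (∫ t in Ioi X, g (φ m) t ^ 2) + 2 * ∫ t in Ioi X, v t ^ 2 := h2 ▸ h1
      _ ≤ 2 * (M₃ / C) + 2 * (M₃ / C) := by
          have := htailb (φ m); gcongr
      _ = 4 * (M₃ / C) := by ring
      _ ≤ ε / 2 := htail4
  -- dominated convergence on (0, X]
  have hcompact : Tendsto (fun m => ∫ t in Ioc (0:ℝ) X, (g (φ m) t - v t) ^ 2)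
      atTop (𝓝 0) := by
    have hDC := tendsto_integral_of_dominated_convergence
      (μ := volume.restrict (Ioc (0:ℝ) X))
      (F := fun m t => (g (φ m) t - v t) ^ 2) (f := fun _ => (0:ℝ))
      (fun _ => (M₂ + X) ^ 2)
      (fun m => (((hg_cont (φ m)).measurable.sub hvmeas).pow_const 2).aestronglyMeasurable)
      (integrableOn_const measure_Ioc_lt_top.ne) ?_ ?_
    · simpa using hDC
    · intro m
      rw [ae_restrict_iff' measurableSet_Ioc]
      refine Eventually.of_forall fun t ht => ?_
      have ht0 : (0:ℝ) ≤ t := le_of_lt ht.1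
      have h1 : |g (φ m) t| ≤ (M₂ + X) / 2 := by
        rw [hug _ _ ht0]
        exact le_trans (hbd (φ m) t ht0) (by linarith [ht.2])
      have h2 : |v t| ≤ (M₂ + X) / 2 := le_trans (hvbd t ht0) (by linarith [ht.2])
      rw [Real.norm_of_nonneg (sq_nonneg _)]
      have h3 : |g (φ m) t - v t| ≤ M₂ + X := by
        calc |g (φ m) t - v t| ≤ |g (φ m) t| + |v t| := abs_sub _ _
          _ ≤ M₂ + X := by linarith
      calc (g (φ m) t - v t) ^ 2 = |g (φ m) t - v t| ^ 2 := (sq_abs _).symm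
        _ ≤ (M₂ + X) ^ 2 := by
            exact pow_le_pow_left₀ (abs_nonneg _) h3 2
    · refine Eventually.of_forall fun t => ?_
      have : Tendsto (fun m => (g (φ m) t - v t) ^ 2) atTop (𝓝 ((v t - v t) ^ 2)) :=
        (Tendsto.sub (hv t) tendsto_const_nhds).pow 2
      simpa using this
  have hev : ∀ᶠ m in atTop, ∫ t in Ioc (0:ℝ) X, (g (φ m) t - v t) ^ 2 < ε / 2 :=
    hcompact.eventually_lt_const (by positivity)
  obtain ⟨N, hN⟩ := eventually_atTop.1 hev
  refine ⟨N, fun m hm => ?_⟩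
  -- split the integral and conclude
  have hIeq : ∫ t in Ioi (0:ℝ), (u (φ m) t - v t) ^ 2
      = ∫ t in Ioi (0:ℝ), (g (φ m) t - v t) ^ 2 :=
    setIntegral_congr_fun measurableSet_Ioi fun t ht => by
      show (u (φ m) t - v t) ^ 2 = (g (φ m) t - v t) ^ 2
      rw [hug (φ m) t (le_of_lt ht)]
  have hunion : Ioc (0:ℝ) X ∪ Ioi X = Ioi (0:ℝ) := Ioc_union_Ioi_eq_Ioi hX0.le
  have hsplit : ∫ t in Ioi (0:ℝ), (g (φ m) t - v t) ^ 2
      = (∫ t in Ioc (0:ℝ) X, (g (φ m) t - v t) ^ 2)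
        + ∫ t in Ioi X, (g (φ m) t - v t) ^ 2 := by
    rw [← hunion]
    exact setIntegral_union (Ioc_disjoint_Ioi le_rfl) measurableSet_Ioi
      ((hDint (φ m)).mono_set (hunion ▸ Set.subset_union_left))
      ((hDint (φ m)).mono_set (hunion ▸ Set.subset_union_right))
  have hnn : 0 ≤ ∫ t in Ioi (0:ℝ), (u (φ m) t - v t) ^ 2 :=
    setIntegral_nonneg measurableSet_Ioi fun t _ => sq_nonneg _
  rw [Real.dist_eq, sub_zero, abs_of_nonneg hnn, hIeq, hsplit]
  have := hN m hm
  have := hdtail m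
  linarith
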